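/- arXiv:2005.13771 — 5 statements merged into one kernel-verified Lean document; each statement's English description precedes it below -/
import Mathlib

section
/- (Weak duality for the soft-margin SVM.) For every w ∈ ℝ^n, every b ∈ ℝ, and every α ∈ ℝ^m with ⟨α, y⟩ = 0, one has (1/2)‖w‖² + Σ_{i=1}^m ℓ_{cC}(1 − y_i(⟨w, x_i⟩ + b)) ≥ −D(α). -/
noncomputable section

open Finset Matrix

/-- Euclidean (ℓ₂) norm of a vector in ℝ^m. -/
def euclNorm {m : ℕ} (v : Fin m → ℝ) : ℝ := Real.sqrt (∑ i, (v i) ^ 2)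

/-- The zero "norm": number of nonzero entries. -/
def zeroNorm {m : ℕ} (α : Fin m → ℝ) : ℕ := {i | α i ≠ 0}.ncard

/-- The soft-margin loss ℓ_{cC}. -/
def softLoss (c C t : ℝ) : ℝ := if 0 ≤ t then C * t ^ 2 / 2 else c * t ^ 2 / 2

/-- The dual penalty h_{cC}. -/
def hLoss (c C t : ℝ) : ℝ := if 0 ≤ t then t ^ 2 / (2 * C) else t ^ 2 / (2 * c)

/-- The matrix Q whose j-th column is y_j · x_j. -/
def Qmat {m n : ℕ} (x : Fin m → Fin n → ℝ) (y : Fin m → ℝ) : Matrix (Fin n) (Fin m) ℝ :=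
  Matrix.of fun i j => y j * x j i

/-- The diagonal matrix E(α). -/
def Emat {m : ℕ} (c C : ℝ) (α : Fin m → ℝ) : Matrix (Fin m) (Fin m) ℝ :=
  Matrix.diagonal fun i => if 0 ≤ α i then 1 / C else 1 / c

/-- The Hessian H(α) = QᵀQ + E(α). -/
def Hmat {m n : ℕ} (c C : ℝ) (x : Fin m → Fin n → ℝ) (y : Fin m → ℝ) (α : Fin m → ℝ) :
    Matrix (Fin m) (Fin m) ℝ :=
  (Qmat x y)ᵀ * Qmat x y + Emat c C α

/-- The dual objective D(α) = (1/2)‖Qα‖² + (1/2)⟨E(α)α, α⟩ − ⟨1, α⟩. -/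
def Dfun {m n : ℕ} (c C : ℝ) (x : Fin m → Fin n → ℝ) (y : Fin m → ℝ) (α : Fin m → ℝ) : ℝ :=
  (1 / 2) * ∑ i, ((Qmat x y).mulVec α i) ^ 2
    + (1 / 2) * ∑ i, ((Emat c C α).mulVec α i) * α i
    - ∑ i, α i

/-- g(α, b) = H(α)α − 1 + b·y. -/
def gfun {m n : ℕ} (c C : ℝ) (x : Fin m → Fin n → ℝ) (y : Fin m → ℝ)
    (α : Fin m → ℝ) (b : ℝ) : Fin m → ℝ :=
  (Hmat c C x y α).mulVec α - (fun _ => (1 : ℝ)) + b • y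

/-- The hard-thresholding operator ℙ_s(α): minimizers of ‖u − α‖ over ‖u‖₀ ≤ s. -/
def hardThr {m : ℕ} (s : ℕ) (α : Fin m → ℝ) : Set (Fin m → ℝ) :=
  {u | zeroNorm u ≤ s ∧ ∀ v : Fin m → ℝ, zeroNorm v ≤ s → euclNorm (u - α) ≤ euclNorm (v - α)}

/-- Feasibility for the sparsity constrained problem (SSVM). -/
def feasible {m : ℕ} (y : Fin m → ℝ) (s : ℕ) (α : Fin m → ℝ) : Prop :=
  ∑ i, α i * y i = 0 ∧ zeroNorm α ≤ s

/-- (α, b) is an η-stationary point of (SSVM). -/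
def etaStat {m n : ℕ} (c C : ℝ) (x : Fin m → Fin n → ℝ) (y : Fin m → ℝ) (s : ℕ) (η : ℝ)
    (α : Fin m → ℝ) (b : ℝ) : Prop :=
  α ∈ hardThr s (α - η • gfun c C x y α b) ∧ ∑ i, α i * y i = 0

/-- The family T_s(α) of index sets of s largest entries in magnitude. -/
def Tsets {m : ℕ} (s : ℕ) (α : Fin m → ℝ) : Set (Finset (Fin m)) :=
  {T | T.card = s ∧ ∀ i ∈ T, ∀ j ∉ T, |α j| ≤ |α i|}

/-- The s-th largest entry of (|α₁|, …, |α_m|). -/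
def sthLargest {m : ℕ} (s : ℕ) (α : Fin m → ℝ) : ℝ :=
  sSup {t : ℝ | s ≤ {i | t ≤ |α i|}.ncard}

/-- Euclidean distance between pairs (α, b) and (α', b') in ℝ^m × ℝ. -/
def pairDist {m : ℕ} (α : Fin m → ℝ) (b : ℝ) (α' : Fin m → ℝ) (b' : ℝ) : ℝ :=
  Real.sqrt ((∑ i, (α i - α' i) ^ 2) + (b - b') ^ 2)

/-- Spectral (operator) norm of a matrix w.r.t. Euclidean norms. -/
def specNorm {m n : ℕ} (Q : Matrix (Fin n) (Fin m) ℝ) : ℝ :=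
  ‖LinearMap.toContinuousLinearMap (Matrix.toEuclideanLin Q)‖

lemma fy_aux (c C a t : ℝ) (hc : 0 < c) (hC : 0 < C) :
    a * t ≤ softLoss c C t + hLoss c C a := by
  unfold softLoss hLoss
  split_ifs with h1 h2 h2
  · have key : C * t ^ 2 / 2 + a ^ 2 / (2 * C) - a * t = (C * t - a) ^ 2 / (2 * C) := by
      field_simp; ring
    have := div_nonneg (sq_nonneg (C * t - a)) (by linarith : (0:ℝ) ≤ 2 * C)
    linarith
  · have h3 : a * t ≤ 0 := mul_nonpos_of_nonpos_of_nonneg (by linarith) h1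
    have h4 : 0 ≤ C * t ^ 2 / 2 := by positivity
    have h5 : 0 ≤ a ^ 2 / (2 * c) := by positivity
    linarith
  · have h3 : a * t ≤ 0 := mul_nonpos_of_nonneg_of_nonpos h2 (by linarith)
    have h4 : 0 ≤ c * t ^ 2 / 2 := by positivity
    have h5 : 0 ≤ a ^ 2 / (2 * C) := by positivity
    linarith
  · have key : c * t ^ 2 / 2 + a ^ 2 / (2 * c) - a * t = (c * t - a) ^ 2 / (2 * c) := by
      field_simp; ring
    have := div_nonneg (sq_nonneg (c * t - a)) (by linarith : (0:ℝ) ≤ 2 * c)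
    linarith

/-- weak duality for the soft-margin SVM. -/
theorem stmt_1 {m n : ℕ} (hm : 1 ≤ m) (hn : 1 ≤ n) (c C : ℝ) (hc : 0 < c) (hcC : c < C)
    (x : Fin m → Fin n → ℝ) (y : Fin m → ℝ) (hy : ∀ i, y i = 1 ∨ y i = -1)
    (w : Fin n → ℝ) (b : ℝ) (α : Fin m → ℝ) (hα : ∑ i, α i * y i = 0) :
    (1 / 2) * ∑ j, (w j) ^ 2
        + ∑ i, softLoss c C (1 - y i * ((∑ j, w j * x i j) + b))
      ≥ - Dfun c C x y α := by
  have hC : 0 < C := hc.trans hcC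
  set v := (Qmat x y).mulVec α with hv
  -- Fenchel–Young pointwise
  have key : ∀ i, α i * (1 - y i * ((∑ j, w j * x i j) + b))
      ≤ softLoss c C (1 - y i * ((∑ j, w j * x i j) + b)) + hLoss c C (α i) := fun i =>
    fy_aux c C (α i) _ hc hC
  -- E term equals sum of hLoss
  have hE : (1/2 : ℝ) * ∑ i, ((Emat c C α).mulVec α i) * α i = ∑ i, hLoss c C (α i) := by
    rw [Finset.mul_sum]
    refine Finset.sum_congr rfl fun i _ => ?_
    simp only [Emat, Matrix.mulVec_diagonal, hLoss]
    split <;> field_simp <;> ring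
  -- swap sums
  have hwv : ∑ j, w j * v j = ∑ i, α i * y i * (∑ j, w j * x i j) := by
    simp only [hv, Qmat, Matrix.mulVec, dotProduct, Matrix.of_apply,
      Finset.mul_sum, Finset.sum_mul]
    rw [Finset.sum_comm]
    exact Finset.sum_congr rfl fun i _ => Finset.sum_congr rfl fun j _ => by ring
  have hswap : ∑ i, α i * (1 - y i * ((∑ j, w j * x i j) + b))
      = ∑ i, α i - ∑ j, w j * v j := by
    rw [hwv]
    have : ∀ i, α i * (1 - y i * ((∑ j, w j * x i j) + b))
        = α i - α i * y i * (∑ j, w j * x i j) - (α i * y i) * b := by intro i; ring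
    rw [Finset.sum_congr rfl fun i _ => this i, Finset.sum_sub_distrib,
      Finset.sum_sub_distrib, ← Finset.sum_mul, hα]
    ring
  have hsumkey : ∑ i, α i * (1 - y i * ((∑ j, w j * x i j) + b))
      ≤ ∑ i, softLoss c C (1 - y i * ((∑ j, w j * x i j) + b)) + ∑ i, hLoss c C (α i) := by
    rw [← Finset.sum_add_distrib]
    exact Finset.sum_le_sum fun i _ => key i
  have hCS : ∑ j, w j * v j ≤ (1/2 : ℝ) * ∑ j, (w j) ^ 2 + (1/2 : ℝ) * ∑ j, (v j) ^ 2 := by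
    rw [Finset.mul_sum, Finset.mul_sum, ← Finset.sum_add_distrib]
    exact Finset.sum_le_sum fun j _ => by nlinarith [sq_nonneg (w j - v j)]
  unfold Dfun
  rw [← hv] at *
  have hD : Dfun c C x y α = (1/2 : ℝ) * ∑ j, (v j) ^ 2 + ∑ i, hLoss c C (α i) - ∑ i, α i := by
    unfold Dfun; rw [← hv, hE]
  rw [hswap] at hsumkey
  linarith
end
end

section
/- (Strong convexity inequality for D.) For all α, α′ ∈ ℝ^m, D(α) − D(α′) ≥ ⟨H(α′)α′ − 1, α − α′⟩ + (1/2)⟨α − α′, P(α − α′)⟩, where P := QᵀQ + (1/C)·I and 1 is the all-ones vector. -/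
noncomputable section

open Finset Matrix

/-- Pointwise strong-convexity inequality for the dual penalty term. -/
lemma key_pt (c C a b : ℝ) (hc : 0 < c) (hcC : c < C) :
    (if 0 ≤ b then 1/C else 1/c) * b * (a - b) + (1/C) * (a - b)^2 / 2
      ≤ (if 0 ≤ a then 1/C else 1/c) * a * a / 2
        - (if 0 ≤ b then 1/C else 1/c) * b * b / 2 := by
  have hC : 0 < C := hc.trans hcC
  have hinv : 1/C ≤ 1/c := one_div_le_one_div_of_le hc hcC.le
  have hCpos : 0 < 1/C := by positivity
  rcases le_or_gt 0 a with ha | ha <;> rcases le_or_gt 0 b with hb | hb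
  · rw [if_pos ha, if_pos hb]; nlinarith [sq_nonneg (a - b)]
  · rw [if_pos ha, if_neg (not_le.2 hb)]
    nlinarith [mul_nonneg (sub_nonneg.2 hinv) (sq_nonneg b),
      mul_nonneg (mul_nonneg (sub_nonneg.2 hinv) ha) (neg_nonneg.2 hb.le)]
  · rw [if_neg (not_le.2 ha), if_pos hb]
    nlinarith [mul_nonneg (sub_nonneg.2 hinv) (sq_nonneg a)]
  · rw [if_neg (not_le.2 ha), if_neg (not_le.2 hb)]
    nlinarith [mul_nonneg (sub_nonneg.2 hinv) (sq_nonneg (a - b))]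

/-- strong convexity inequality for D. -/
theorem stmt_4 {m n : ℕ} (hm : 1 ≤ m) (hn : 1 ≤ n) (c C : ℝ) (hc : 0 < c) (hcC : c < C)
    (x : Fin m → Fin n → ℝ) (y : Fin m → ℝ) (hy : ∀ i, y i = 1 ∨ y i = -1)
    (α α' : Fin m → ℝ) :
    Dfun c C x y α - Dfun c C x y α' ≥
      (∑ i, ((Hmat c C x y α').mulVec α' i - 1) * (α i - α' i))
        + (1 / 2) * ∑ i, (α i - α' i) *
            (((Qmat x y)ᵀ * Qmat x y + (1 / C) • (1 : Matrix (Fin m) (Fin m) ℝ)).mulVec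
              (α - α') i) := by
  have hC : 0 < C := hc.trans hcC
  set Q : Matrix (Fin n) (Fin m) ℝ := Qmat x y with hQ
  -- key adjoint identity
  have K : ∀ u w : Fin m → ℝ, ∑ i, u i * ((Qᵀ * Q).mulVec w i)
      = ∑ k, (Q.mulVec u k) * (Q.mulVec w k) := by
    intro u w
    have h1 : ∑ i, u i * ((Qᵀ * Q).mulVec w i) = u ⬝ᵥ ((Qᵀ * Q) *ᵥ w) := rfl
    have h2 : ∑ k, (Q.mulVec u k) * (Q.mulVec w k) = (Q *ᵥ u) ⬝ᵥ (Q *ᵥ w) := rfl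
    rw [h1, h2, ← Matrix.mulVec_mulVec, Matrix.dotProduct_mulVec, Matrix.vecMul_transpose]
  have hE : ∀ (β : Fin m → ℝ) (i : Fin m),
      (Emat c C β).mulVec β i = (if 0 ≤ β i then 1/C else 1/c) * β i := by
    intro β i
    simp [Emat, Matrix.mulVec_diagonal]
  have hH : ∀ i, (Hmat c C x y α').mulVec α' i
      = (Qᵀ * Q).mulVec α' i + (if 0 ≤ α' i then 1/C else 1/c) * α' i := by
    intro i
    simp only [Hmat, Matrix.add_mulVec, Pi.add_apply, hE, hQ]
  have hP : ∀ i, ((Qᵀ * Q + (1 / C) • (1 : Matrix (Fin m) (Fin m) ℝ)).mulVec (α - α')) i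
      = (Qᵀ * Q).mulVec (α - α') i + (1/C) * (α i - α' i) := by
    intro i
    simp only [Matrix.add_mulVec, Pi.add_apply, Matrix.smul_mulVec,
      Matrix.one_mulVec, Pi.smul_apply, Pi.sub_apply, smul_eq_mul]
  -- quadratic kernel identity
  have hsub : Q *ᵥ (α - α') = Q *ᵥ α - Q *ᵥ α' := Matrix.mulVec_sub Q α α'
  have k1 := K (α - α') α'
  have k2 := K (α - α') (α - α')
  rw [hsub] at k1
  simp only [Pi.sub_apply] at k1 k2
  have E1 : (1/2) * ∑ k, (Q.mulVec α k)^2 - (1/2) * ∑ k, (Q.mulVec α' k)^2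
      = ∑ i, (α i - α' i) * ((Qᵀ * Q).mulVec α' i)
        + (1/2) * ∑ i, (α i - α' i) * ((Qᵀ * Q).mulVec (α - α') i) := by
    rw [k1, k2, hsub, Finset.mul_sum, Finset.mul_sum, Finset.mul_sum, ← Finset.sum_sub_distrib,
      ← Finset.sum_add_distrib]
    simp only [Pi.sub_apply]
    exact Finset.sum_congr rfl fun k _ => by ring
  -- pointwise inequality summed
  have key : ∑ i, ((if 0 ≤ α' i then 1/C else 1/c) * α' i * (α i - α' i)
        + (1/C) * (α i - α' i)^2 / 2)
      ≤ ∑ i, ((if 0 ≤ α i then 1/C else 1/c) * α i * α i / 2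
        - (if 0 ≤ α' i then 1/C else 1/c) * α' i * α' i / 2) :=
    Finset.sum_le_sum fun i _ => key_pt c C (α i) (α' i) hc hcC
  rw [Finset.sum_add_distrib, Finset.sum_sub_distrib] at key
  -- rewrite RHS pieces
  have R1 : ∑ i, ((Hmat c C x y α').mulVec α' i - 1) * (α i - α' i)
      = ∑ i, (α i - α' i) * ((Qᵀ * Q).mulVec α' i)
        + ∑ i, (if 0 ≤ α' i then 1/C else 1/c) * α' i * (α i - α' i)
        - ∑ i, (α i - α' i) := by
    rw [← Finset.sum_add_distrib, ← Finset.sum_sub_distrib]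
    exact Finset.sum_congr rfl fun i _ => by rw [hH i]; ring
  have R2 : ∑ i, (α i - α' i)
        * ((Qᵀ * Q + (1 / C) • (1 : Matrix (Fin m) (Fin m) ℝ)).mulVec (α - α') i)
      = ∑ i, (α i - α' i) * ((Qᵀ * Q).mulVec (α - α') i)
        + ∑ i, (1/C) * (α i - α' i)^2 := by
    rw [← Finset.sum_add_distrib]
    exact Finset.sum_congr rfl fun i _ => by rw [hP i]; ring
  have hZ : ∑ i, (1/C) * (α i - α' i)^2 / 2 = (∑ i, (1/C) * (α i - α' i)^2) / 2 :=
    (Finset.sum_div _ _ _).symm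
  -- rewrite D values
  have hTA : ∑ i, ((Emat c C α).mulVec α i) * α i
      = ∑ i, (if 0 ≤ α i then 1/C else 1/c) * α i * α i :=
    Finset.sum_congr rfl fun i _ => by rw [hE]
  have hTB : ∑ i, ((Emat c C α').mulVec α' i) * α' i
      = ∑ i, (if 0 ≤ α' i then 1/C else 1/c) * α' i * α' i :=
    Finset.sum_congr rfl fun i _ => by rw [hE]
  have hDiv : ∀ β : Fin m → ℝ, ∑ i, (if 0 ≤ β i then 1/C else 1/c) * β i * β i / 2
      = (∑ i, (if 0 ≤ β i then 1/C else 1/c) * β i * β i) / 2 := fun β =>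
    (Finset.sum_div _ _ _).symm
  rw [hDiv α, hDiv α'] at key
  simp only [Dfun, ← hQ, hTA, hTB]
  have hL : ∑ i, (α i - α' i) = ∑ i, α i - ∑ i, α' i := Finset.sum_sub_distrib _ _
  rw [ge_iff_le, R1, R2]
  linarith [E1, key]
end
end

section
/- (Theorem 4 b, case ‖α*‖₀ = s.) If α* is a local minimizer of (SSVM) with ‖α*‖₀ = s, then there exist b* ∈ ℝ and η̄ > 0 (depending on α*) such that for every η with 0 < η ≤ η̄, the pair (α*, b*) is an η-stationary point of (SSVM). -/
noncomputable section

open Finset Matrix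

/-- Auxiliary: sum against a two-point vector. -/
lemma sum_two {m : ℕ} (f y : Fin m → ℝ) (j i0 : Fin m) (hji : j ≠ i0) :
    ∑ i, f i * ((if i = j then y j else 0) - (if i = i0 then y i0 else 0))
      = f j * y j - f i0 * y i0 := by
  classical
  have key : ∀ i : Fin m, f i * ((if i = j then y j else 0) - (if i = i0 then y i0 else 0))
      = (if i = j then f i * y j else 0) - (if i = i0 then f i * y i0 else 0) := by
    intro i
    by_cases h1 : i = j
    · subst h1; rw [if_pos rfl, if_pos rfl, if_neg hji, if_neg hji]; ring
    · by_cases h2 : i = i0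
      · subst h2; rw [if_neg h1, if_pos rfl, if_neg h1, if_pos rfl]; ring
      · rw [if_neg h1, if_neg h2, if_neg h1, if_neg h2]; ring
  rw [Finset.sum_congr rfl fun i _ => key i, Finset.sum_sub_distrib]
  simp [Finset.sum_ite_eq' Finset.univ]

/-- Auxiliary: zeroNorm as a filter card. -/
lemma zeroNorm_eq_card {m : ℕ} (α : Fin m → ℝ) [DecidablePred fun i => α i ≠ 0] :
    zeroNorm α = (Finset.univ.filter (fun i => α i ≠ 0)).card := by
  rw [zeroNorm, Set.ncard_eq_toFinset_card', Set.toFinset_setOf]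

/-- Auxiliary: quadratic expansion of Dfun along a sign-stable line. -/
lemma Dfun_line {m n : ℕ} (c C : ℝ) (x : Fin m → Fin n → ℝ) (y : Fin m → ℝ)
    (α d : Fin m → ℝ) (t : ℝ)
    (hsign : ∀ i, (0 ≤ α i + t * d i) ↔ (0 ≤ α i)) :
    Dfun c C x y (α + t • d) = Dfun c C x y α
      + t * (∑ i, (((Hmat c C x y α).mulVec α i) - 1) * d i)
      + t ^ 2 / 2 * (∑ i, ((Qmat x y).mulVec d i) ^ 2
          + ∑ i, (if 0 ≤ α i then 1 / C else 1 / c) * d i ^ 2) := by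
  have hE : Emat c C (α + t • d) = Emat c C α := by
    apply congrArg Matrix.diagonal
    funext i
    simp only [Pi.add_apply, Pi.smul_apply, smul_eq_mul]
    by_cases h : 0 ≤ α i
    · rw [if_pos h, if_pos ((hsign i).2 h)]
    · rw [if_neg h, if_neg (fun hh => h ((hsign i).1 hh))]
  have hQlin : ∀ i, (Qmat x y).mulVec (α + t • d) i
      = (Qmat x y).mulVec α i + t * (Qmat x y).mulVec d i := by
    intro i; rw [Matrix.mulVec_add, Matrix.mulVec_smul]; rfl
  have htr : ∀ w : Fin n → ℝ,
      ∑ j, ((Qmat x y)ᵀ.mulVec w) j * d j = ∑ i, w i * (Qmat x y).mulVec d i := by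
    intro w
    simp only [Matrix.mulVec, dotProduct, Matrix.transpose_apply, Finset.sum_mul,
      Finset.mul_sum]
    rw [Finset.sum_comm]
    exact Finset.sum_congr rfl fun i _ => Finset.sum_congr rfl fun j _ => by ring
  have hH : ∀ i, (Hmat c C x y α).mulVec α i
      = (Qmat x y)ᵀ.mulVec ((Qmat x y).mulVec α) i
        + (if 0 ≤ α i then 1 / C else 1 / c) * α i := by
    intro i
    rw [Hmat, Matrix.add_mulVec]
    simp only [Pi.add_apply, Emat, Matrix.mulVec_diagonal, ← Matrix.mulVec_mulVec]
  have hBsplit : ∑ i, (((Hmat c C x y α).mulVec α i) - 1) * d i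
      = (∑ i, (Qmat x y).mulVec α i * (Qmat x y).mulVec d i)
        + (∑ i, (if 0 ≤ α i then 1 / C else 1 / c) * α i * d i) - ∑ i, d i := by
    rw [← htr, ← Finset.sum_add_distrib, ← Finset.sum_sub_distrib]
    exact Finset.sum_congr rfl fun i _ => by rw [hH i]; ring
  rw [Dfun, Dfun, hE, hBsplit]
  simp only [hQlin, Emat, Matrix.mulVec_diagonal, Pi.add_apply, Pi.smul_apply, smul_eq_mul]
  have e1 : ∑ i, ((Qmat x y).mulVec α i + t * (Qmat x y).mulVec d i) ^ 2
      = ∑ i, ((Qmat x y).mulVec α i) ^ 2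
        + t * (2 * ∑ i, (Qmat x y).mulVec α i * (Qmat x y).mulVec d i)
        + t ^ 2 * ∑ i, ((Qmat x y).mulVec d i) ^ 2 := by
    rw [Finset.mul_sum, Finset.mul_sum, Finset.mul_sum, ← Finset.sum_add_distrib,
      ← Finset.sum_add_distrib]
    exact Finset.sum_congr rfl fun i _ => by ring
  have e2 : ∑ i, (if 0 ≤ α i then 1 / C else 1 / c) * (α i + t * d i) * (α i + t * d i)
      = ∑ i, (if 0 ≤ α i then 1 / C else 1 / c) * α i * α i
        + t * (2 * ∑ i, (if 0 ≤ α i then 1 / C else 1 / c) * α i * d i)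
        + t ^ 2 * ∑ i, (if 0 ≤ α i then 1 / C else 1 / c) * d i ^ 2 := by
    rw [Finset.mul_sum, Finset.mul_sum, Finset.mul_sum, ← Finset.sum_add_distrib,
      ← Finset.sum_add_distrib]
    exact Finset.sum_congr rfl fun i _ => by ring
  have e3 : ∑ i, (α i + t * d i) = ∑ i, α i + t * ∑ i, d i := by
    rw [Finset.mul_sum, ← Finset.sum_add_distrib]
  rw [e1, e2, e3]
  ring

/-- a local minimizer with ‖α*‖₀ = s is an η-stationary point for all small η. -/
theorem stmt_10 {m n : ℕ} (hm : 1 ≤ m) (hn : 1 ≤ n) (c C : ℝ) (hc : 0 < c) (hcC : c < C)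
    (x : Fin m → Fin n → ℝ) (y : Fin m → ℝ) (hy : ∀ i, y i = 1 ∨ y i = -1)
    (s : ℕ) (hs1 : 1 ≤ s) (hs2 : s ≤ m)
    (αstar : Fin m → ℝ) (hfeas : feasible y s αstar)
    (hloc : ∃ ε > (0 : ℝ), ∀ α : Fin m → ℝ, feasible y s α → euclNorm (α - αstar) < ε →
      Dfun c C x y αstar ≤ Dfun c C x y α)
    (hz : zeroNorm αstar = s) :
    ∃ bstar : ℝ, ∃ ηbar > (0 : ℝ), ∀ η : ℝ, 0 < η → η ≤ ηbar →
      etaStat c C x y s η αstar bstar := by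
  classical
  obtain ⟨ε, hε, hmin⟩ := hloc
  set T : Finset (Fin m) := Finset.univ.filter (fun i => αstar i ≠ 0) with hTdef
  have hT : T.card = s := by rw [hTdef, ← zeroNorm_eq_card]; exact hz
  have hTmem : ∀ i, i ∈ T ↔ αstar i ≠ 0 := by intro i; simp [hTdef]
  have hTne : T.Nonempty := Finset.card_pos.mp (by omega)
  set δ : ℝ := T.inf' hTne (fun i => |αstar i|) with hδdef
  have hδle : ∀ i ∈ T, δ ≤ |αstar i| := fun i hi => Finset.inf'_le _ hi
  have hδpos : 0 < δ := by
    rw [hδdef, Finset.lt_inf'_iff]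
    exact fun i hi => abs_pos.mpr ((hTmem i).mp hi)
  obtain ⟨i0, hi0⟩ := hTne
  have hy2 : ∀ i, y i * y i = 1 := by intro i; rcases hy i with h | h <;> rw [h] <;> ring
  set v : Fin m → ℝ := fun i => (Hmat c C x y αstar).mulVec αstar i - 1 with hvdef
  clear_value v
  set t1 : ℝ := min δ (ε / (m + 1)) with ht1def
  have ht1pos : 0 < t1 := lt_min hδpos (by positivity)
  -- first-order condition on the support
  have key : ∀ j ∈ T, v j * y j = v i0 * y i0 := by
    intro j hj
    by_cases hji : j = i0
    · rw [hji]
    set d : Fin m → ℝ := fun i => (if i = j then y j else 0) - (if i = i0 then y i0 else 0)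
      with hddef
    have hdsupp : ∀ i, d i ≠ 0 → i ∈ T := by
      intro i hdi
      by_contra hiT
      apply hdi
      have h1 : i ≠ j := fun h => hiT (h ▸ hj)
      have h2 : i ≠ i0 := fun h => hiT (h ▸ hi0)
      simp [hddef, h1, h2]
    have hdb : ∀ i, |d i| ≤ 1 := by
      intro i
      by_cases h1 : i = j
      · subst h1
        simp only [hddef, if_pos rfl, if_neg hji, sub_zero]
        rcases hy i with h | h <;> rw [h] <;> norm_num
      · by_cases h2 : i = i0
        · subst h2
          simp only [hddef, if_neg h1, if_pos rfl, zero_sub, abs_neg]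
          rcases hy i with h | h <;> rw [h] <;> norm_num
        · simp [hddef, h1, h2]
    have hdy : ∑ i, y i * d i = 0 := by
      simp only [hddef]
      rw [sum_two y y j i0 hji, hy2 j, hy2 i0]
      ring
    set B : ℝ := ∑ i, v i * d i with hBdef
    clear_value B
    set A : ℝ := ∑ i, ((Qmat x y).mulVec d i) ^ 2
        + ∑ i, (if 0 ≤ αstar i then 1 / C else 1 / c) * d i ^ 2 with hAdef
    clear_value A
    have step : ∀ t : ℝ, |t| < t1 → 0 ≤ t * B + t ^ 2 / 2 * A := by
      intro t ht
      have htδ : |t| < δ := lt_of_lt_of_le ht (min_le_left _ _)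
      have htε : |t| < ε / (m + 1) := lt_of_lt_of_le ht (min_le_right _ _)
      have hsign : ∀ i, (0 ≤ αstar i + t * d i) ↔ (0 ≤ αstar i) := by
        intro i
        by_cases hdi : d i = 0
        · simp [hdi]
        · have hiT := hdsupp i hdi
          have habs : |t * d i| < |αstar i| := by
            rw [abs_mul]
            calc |t| * |d i| ≤ |t| * 1 :=
                  mul_le_mul_of_nonneg_left (hdb i) (abs_nonneg t)
              _ = |t| := mul_one _
              _ < δ := htδ
              _ ≤ |αstar i| := hδle i hiT
          rcases le_or_gt 0 (αstar i) with h | h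
          · have h2 := (abs_lt.mp habs).1
            rw [abs_of_nonneg h] at h2
            exact ⟨fun _ => h, fun _ => by linarith⟩
          · have h2 := (abs_lt.mp habs).2
            rw [abs_of_neg h] at h2
            exact ⟨fun hh => by linarith, fun hh => by linarith⟩
      have hfeas' : feasible y s (αstar + t • d) := by
        constructor
        · have hsum : ∑ i, (αstar i + t * d i) * y i
              = ∑ i, αstar i * y i + t * ∑ i, y i * d i := by
            rw [Finset.mul_sum, ← Finset.sum_add_distrib]
            exact Finset.sum_congr rfl fun i _ => by ring
          calc ∑ i, (αstar + t • d) i * y i = ∑ i, (αstar i + t * d i) * y i := rfl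
            _ = ∑ i, αstar i * y i + t * ∑ i, y i * d i := hsum
            _ = 0 := by rw [hfeas.1, hdy]; ring
        · have hsub : {i | (αstar + t • d) i ≠ 0} ⊆ (T : Set (Fin m)) := by
            intro i hi
            by_contra hiT
            apply hi
            have h1 : αstar i = 0 := by
              by_contra hne; exact hiT ((hTmem i).mpr hne)
            have h2 : d i = 0 := by
              by_contra hne; exact hiT (hdsupp i hne)
            simp [h1, h2]
          calc zeroNorm (αstar + t • d) ≤ (T : Set (Fin m)).ncard :=
              Set.ncard_le_ncard hsub T.finite_toSet
            _ = T.card := Set.ncard_coe_finset T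
            _ = s := hT
      have henorm : euclNorm ((αstar + t • d) - αstar) < ε := by
        rw [add_sub_cancel_left, euclNorm]
        have hS : ∑ i, ((t • d) i) ^ 2 ≤ t ^ 2 * m := by
          calc ∑ i, ((t • d) i) ^ 2 ≤ ∑ _i : Fin m, t ^ 2 := by
                apply Finset.sum_le_sum
                intro i _
                have h1 : |d i| ^ 2 ≤ 1 := by nlinarith [hdb i, abs_nonneg (d i)]
                have h2 : ((t • d) i) ^ 2 = t ^ 2 * |d i| ^ 2 := by
                  simp [Pi.smul_apply, smul_eq_mul, mul_pow, sq_abs]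
                nlinarith [sq_nonneg t]
            _ = (m : ℝ) * t ^ 2 := by
                simp [Finset.sum_const, Finset.card_univ, nsmul_eq_mul]
            _ = t ^ 2 * m := by ring
        rw [Real.sqrt_lt' hε]
        have hmε : |t| * (m + 1) < ε := (lt_div_iff₀ (by positivity)).mp htε
        have hmle : (m : ℝ) ≤ ((m : ℝ) + 1) ^ 2 := by
          nlinarith [Nat.cast_nonneg (α := ℝ) m]
        have h3 : t ^ 2 * m ≤ (|t| * (m + 1)) ^ 2 := by
          calc t ^ 2 * m ≤ t ^ 2 * (((m : ℝ) + 1) ^ 2) :=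
              mul_le_mul_of_nonneg_left hmle (sq_nonneg t)
            _ = (|t| * (m + 1)) ^ 2 := by rw [mul_pow, sq_abs]
        have h4 : (|t| * (m + 1)) ^ 2 < ε ^ 2 := by
          nlinarith [abs_nonneg t, mul_nonneg (abs_nonneg t)
            (show (0:ℝ) ≤ (m:ℝ) + 1 by positivity)]
        linarith
      have hD := hmin (αstar + t • d) hfeas' henorm
      rw [Dfun_line c C x y αstar d t hsign] at hD
      have hBv : ∑ i, ((Hmat c C x y αstar).mulVec αstar i - 1) * d i = B := by
        rw [hBdef]; simp only [hvdef]
      rw [hBv, ← hAdef] at hD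
      linarith
    have hB0 : B = 0 := by
      by_contra hB
      have hBpos : 0 < |B| := abs_pos.mpr hB
      set τ : ℝ := min (t1 / 2) (|B| / (|A| + 1)) with hτdef
      have hττ1 : τ ≤ t1 / 2 := min_le_left _ _
      have hττ2 : τ ≤ |B| / (|A| + 1) := min_le_right _ _
      have hApos : (0 : ℝ) < |A| + 1 := by positivity
      have hτpos : 0 < τ := by
        rw [hτdef]
        exact lt_min (by linarith) (by positivity)
      clear_value τ
      clear hτdef
      have hτ1 : τ < t1 := lt_of_le_of_lt hττ1 (by linarith)
      have hτ2 : τ * (|A| + 1) ≤ |B| := by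
        calc τ * (|A| + 1) ≤ (|B| / (|A| + 1)) * (|A| + 1) :=
            mul_le_mul_of_nonneg_right hττ2 (le_of_lt hApos)
          _ = |B| := div_mul_cancel₀ _ (ne_of_gt hApos)
      have e2 : τ ^ 2 / 2 * A ≤ τ ^ 2 / 2 * |A| :=
        mul_le_mul_of_nonneg_left (le_abs_self A) (by positivity)
      have e4 : 0 < τ * τ := mul_pos hτpos hτpos
      have e5 : 0 ≤ τ * τ * |A| := by positivity
      rcases lt_or_gt_of_ne hB with hneg | hpos
      · have h := step τ (by rwa [abs_of_pos hτpos])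
        rw [abs_of_neg hneg] at hτ2
        have e3 : τ * (τ * (|A| + 1)) ≤ τ * (-B) :=
          mul_le_mul_of_nonneg_left hτ2 hτpos.le
        linarith only [h, e2, e3, e4, e5]
      · have h := step (-τ) (by rw [abs_neg, abs_of_pos hτpos]; exact hτ1)
        rw [abs_of_pos hpos] at hτ2
        have e3 : τ * (τ * (|A| + 1)) ≤ τ * B :=
          mul_le_mul_of_nonneg_left hτ2 hτpos.le
        linarith only [h, e2, e3, e4, e5]
    have hBval : B = v j * y j - v i0 * y i0 := by
      rw [hBdef]; simp only [hddef]; exact sum_two v y j i0 hji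
    rw [hBval] at hB0
    linarith
  -- the multiplier and the gradient
  set b : ℝ := -(v i0 * y i0) with hbdef
  set g : Fin m → ℝ := gfun c C x y αstar b with hgdef
  have hgi : ∀ i, g i = v i + b * y i := by
    intro i
    simp only [hgdef, gfun, Pi.add_apply, Pi.sub_apply, Pi.smul_apply, smul_eq_mul, hvdef]
  have hgT : ∀ i ∈ T, g i = 0 := by
    intro i hi
    have h1 : v i * y i = -b := by rw [key i hi, hbdef]; ring
    have h2 : v i = -b * y i := by
      calc v i = v i * (y i * y i) := by rw [hy2 i, mul_one]
        _ = (v i * y i) * y i := by ring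
        _ = -b * y i := by rw [h1]
    rw [hgi i, h2]; ring
  set G : ℝ := ∑ i, |g i| with hGdef
  have hGnn : 0 ≤ G := Finset.sum_nonneg fun i _ => abs_nonneg _
  have hGle : ∀ i, |g i| ≤ G := fun i =>
    Finset.single_le_sum (f := fun i => |g i|) (fun i _ => abs_nonneg (g i))
      (Finset.mem_univ i)
  clear_value g G
  have hG1 : (0 : ℝ) < G + 1 := by linarith only [hGnn]
  refine ⟨b, δ / (G + 1), div_pos hδpos hG1, ?_⟩
  intro η hη hηbar
  constructor
  swap
  · exact hfeas.1
  set β : Fin m → ℝ := αstar - η • g with hβdef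
  have hrw : αstar - η • gfun c C x y αstar b = β := by rw [hβdef, hgdef]
  rw [hrw]
  have hβT : ∀ i ∈ T, β i = αstar i := by
    intro i hi
    simp [hβdef, hgT i hi]
  have hβoff : ∀ i, i ∉ T → (β i = -(η * g i) ∧ αstar i = 0) := by
    intro i hi
    have h0 : αstar i = 0 := by
      by_contra h; exact hi ((hTmem i).mpr h)
    exact ⟨by simp [hβdef, h0], h0⟩
  have hβsmall : ∀ i, i ∉ T → |β i| ≤ δ := by
    intro i hi
    rw [(hβoff i hi).1, abs_neg, abs_mul, abs_of_pos hη]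
    calc η * |g i| ≤ (δ / (G + 1)) * G :=
        mul_le_mul hηbar (hGle i) (abs_nonneg _) (le_of_lt (div_pos hδpos hG1))
      _ ≤ δ := by
          rw [div_mul_eq_mul_div, div_le_iff₀ hG1]
          linarith only [hδpos]
  have hβbig : ∀ i ∈ T, δ ≤ |β i| := fun i hi => by rw [hβT i hi]; exact hδle i hi
  refine ⟨hfeas.2, ?_⟩
  intro u hu
  rw [euclNorm, euclNorm]
  apply Real.sqrt_le_sqrt
  set Zf : Finset (Fin m) := Finset.univ.filter (fun i => u i = 0) with hZdef
  have hLHS : ∑ i, ((αstar - β) i) ^ 2 = ∑ i ∈ Tᶜ, β i ^ 2 := by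
    have h1 : ∀ i, ((αstar - β) i) ^ 2 = (η * g i) ^ 2 := by
      intro i
      simp only [hβdef, Pi.sub_apply, Pi.smul_apply, smul_eq_mul]
      ring
    calc ∑ i, ((αstar - β) i) ^ 2 = ∑ i, (η * g i) ^ 2 :=
        Finset.sum_congr rfl fun i _ => h1 i
      _ = ∑ i ∈ Tᶜ, (η * g i) ^ 2 :=
        (Finset.sum_subset (Finset.subset_univ _) (fun i _ hi => by
          rw [hgT i (by simpa using hi)]; ring)).symm
      _ = ∑ i ∈ Tᶜ, β i ^ 2 :=
        Finset.sum_congr rfl fun i hi => by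
          rw [(hβoff i (by simpa using hi)).1]; ring
  have hRHS : ∑ i ∈ Zf, β i ^ 2 ≤ ∑ i, ((u - β) i) ^ 2 := by
    calc ∑ i ∈ Zf, β i ^ 2 = ∑ i ∈ Zf, ((u - β) i) ^ 2 :=
        Finset.sum_congr rfl fun i hi => by
          have h0 : u i = 0 := by
            have := Finset.mem_filter.mp hi; exact this.2
          simp only [Pi.sub_apply, h0]
          ring
      _ ≤ ∑ i, ((u - β) i) ^ 2 :=
        Finset.sum_le_sum_of_subset_of_nonneg (Finset.subset_univ _)
          (fun i _ _ => sq_nonneg _)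
  have hZcard : m - s ≤ Zf.card := by
    have h1 : (Finset.univ.filter (fun i => ¬ u i = 0)).card ≤ s := by
      have := hu
      rw [zeroNorm_eq_card] at this
      simpa [ne_eq] using this
    have h2 : Zf.card + (Finset.univ.filter (fun i => ¬ u i = 0)).card = m := by
      rw [hZdef, Finset.card_filter_add_card_filter_not]
      simp
    omega
  have hTc : Tᶜ.card = m - s := by
    rw [Finset.card_compl, hT]
    simp
  have c1 : (Tᶜ ∩ Zf).card + (Tᶜ \ Zf).card = Tᶜ.card :=
    Finset.card_inter_add_card_sdiff _ _
  have c2 : (Tᶜ ∩ Zf).card + (Zf \ Tᶜ).card = Zf.card := by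
    rw [Finset.inter_comm]
    exact Finset.card_inter_add_card_sdiff _ _
  have hcc : (Tᶜ \ Zf).card ≤ (Zf \ Tᶜ).card := by omega
  have s1 : ∑ i ∈ Tᶜ \ Zf, β i ^ 2 ≤ ((Tᶜ \ Zf).card : ℝ) * δ ^ 2 := by
    rw [← nsmul_eq_mul]
    apply Finset.sum_le_card_nsmul
    intro i hi
    have hiT : i ∉ T := by
      have := (Finset.mem_sdiff.mp hi).1
      simpa using this
    calc β i ^ 2 = |β i| ^ 2 := (sq_abs _).symm
      _ ≤ δ ^ 2 := pow_le_pow_left₀ (abs_nonneg _) (hβsmall i hiT) 2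
  have s2 : ((Zf \ Tᶜ).card : ℝ) * δ ^ 2 ≤ ∑ i ∈ Zf \ Tᶜ, β i ^ 2 := by
    rw [← nsmul_eq_mul]
    apply Finset.card_nsmul_le_sum
    intro i hi
    have hiT : i ∈ T := by
      have := (Finset.mem_sdiff.mp hi).2
      simpa using this
    calc δ ^ 2 ≤ |β i| ^ 2 := pow_le_pow_left₀ (le_of_lt hδpos) (hβbig i hiT) 2
      _ = β i ^ 2 := sq_abs _
  have smid : ((Tᶜ \ Zf).card : ℝ) * δ ^ 2 ≤ ((Zf \ Tᶜ).card : ℝ) * δ ^ 2 :=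
    mul_le_mul_of_nonneg_right (Nat.cast_le.mpr hcc) (sq_nonneg δ)
  have split1 : ∑ i ∈ Tᶜ ∩ Zf, β i ^ 2 + ∑ i ∈ Tᶜ \ Zf, β i ^ 2 = ∑ i ∈ Tᶜ, β i ^ 2 :=
    Finset.sum_inter_add_sum_sdiff _ _ _
  have split2 : ∑ i ∈ Tᶜ ∩ Zf, β i ^ 2 + ∑ i ∈ Zf \ Tᶜ, β i ^ 2 = ∑ i ∈ Zf, β i ^ 2 := by
    rw [Finset.inter_comm]
    exact Finset.sum_inter_add_sum_sdiff _ _ _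
  calc ∑ i, ((αstar - β) i) ^ 2 = ∑ i ∈ Tᶜ, β i ^ 2 := hLHS
    _ ≤ ∑ i ∈ Zf, β i ^ 2 := by linarith
    _ ≤ ∑ i, ((u - β) i) ^ 2 := hRHS
end
end

section
/- (Lemma 1 b.) If α* is a local minimizer of (SSVM) with ‖α*‖₀ < s, then α* is a global minimizer of (SSVM) and is the unique global minimizer: D(α*) ≤ D(α) for every feasible α, and any feasible α with D(α) = D(α*) equals α*. -/
noncomputable section

open Finset Matrix

lemma breg_aux {p q : ℝ} (hp : 0 < p) (hpq : p ≤ q) (a b : ℝ) :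
    p*(b-a)^2 ≤ (if 0 ≤ b then p*b^2 else q*b^2) - (if 0 ≤ a then p*a^2 else q*a^2)
        - (if 0 ≤ a then 2*p*a else 2*q*a) * (b-a) ∧
      (if 0 ≤ b then p*b^2 else q*b^2) - (if 0 ≤ a then p*a^2 else q*a^2)
        - (if 0 ≤ a then 2*p*a else 2*q*a) * (b-a) ≤ q*(b-a)^2 := by
  split_ifs with hb ha ha
  · constructor <;> nlinarith [mul_nonneg (sub_nonneg.2 hpq) (sq_nonneg (b-a))]
  · have h1 : (0:ℝ) ≤ a^2 - 2*a*b := by nlinarith [le_of_not_ge ha]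
    constructor <;> nlinarith [mul_nonneg (sub_nonneg.2 hpq) h1,
      mul_nonneg (sub_nonneg.2 hpq) (sq_nonneg b)]
  · have h1 : (0:ℝ) ≤ a^2 - 2*a*b := by nlinarith [le_of_not_ge hb]
    constructor <;> nlinarith [mul_nonneg (sub_nonneg.2 hpq) h1,
      mul_nonneg (sub_nonneg.2 hpq) (sq_nonneg b)]
  · constructor <;> nlinarith [mul_nonneg (sub_nonneg.2 hpq) (sq_nonneg (b-a))]

lemma phi_breg {c C : ℝ} (hc : 0 < c) (hcC : c < C) (a b : ℝ) :
    (b - a)^2 / (2*C) ≤ hLoss c C b - hLoss c C a - (if 0 ≤ a then a / C else a / c) * (b - a) ∧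
      hLoss c C b - hLoss c C a - (if 0 ≤ a then a / C else a / c) * (b - a) ≤ (b - a)^2 / (2*c) := by
  have hC : 0 < C := hc.trans hcC
  have hp : 0 < 1/(2*C) := by positivity
  have hpq : 1/(2*C) ≤ 1/(2*c) := by
    rw [div_le_div_iff₀ (by positivity) (by positivity)]; linarith
  have e1 : ∀ t : ℝ, hLoss c C t = (if 0 ≤ t then (1/(2*C))*t^2 else (1/(2*c))*t^2) := by
    intro t; unfold hLoss; split_ifs <;> ring
  have e2 : (if 0 ≤ a then a/C else a/c) = (if 0 ≤ a then 2*(1/(2*C))*a else 2*(1/(2*c))*a) := by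
    split_ifs <;> field_simp
  rw [e1, e1, e2, (by ring : (b-a)^2/(2*C) = (1/(2*C))*(b-a)^2),
    (by ring : (b-a)^2/(2*c) = (1/(2*c))*(b-a)^2)]
  exact breg_aux hp hpq a b

lemma sum_sq_add {m : ℕ} (u v : Fin m → ℝ) :
    ∑ i, (u i + v i)^2 = ∑ i, (u i)^2 + 2 * ∑ i, u i * v i + ∑ i, (v i)^2 := by
  rw [Finset.mul_sum, ← Finset.sum_add_distrib, ← Finset.sum_add_distrib]
  exact Finset.sum_congr rfl fun i _ => by ring

lemma quad_expand {m n : ℕ} (Q : Matrix (Fin n) (Fin m) ℝ) (α β : Fin m → ℝ) :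
    (1/2) * ∑ i, (Q.mulVec β i)^2 =
      (1/2) * ∑ i, (Q.mulVec α i)^2 + ∑ i, ((Qᵀ*Q).mulVec α i) * (β i - α i)
        + (1/2) * ∑ i, (Q.mulVec (β - α) i)^2 := by
  have hβ : Q.mulVec β = Q.mulVec α + Q.mulVec (β - α) := by
    rw [← Matrix.mulVec_add]; congr 1; funext k; simp
  have hcross : ∑ i, ((Qᵀ*Q).mulVec α i) * (β i - α i)
      = ∑ i, (Q.mulVec α i) * (Q.mulVec (β - α) i) := by
    have h1 : ((Qᵀ*Q).mulVec α) ⬝ᵥ (β - α) = (Q.mulVec α) ⬝ᵥ (Q.mulVec (β - α)) := by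
      rw [← Matrix.mulVec_mulVec, Matrix.mulVec_transpose, ← Matrix.dotProduct_mulVec]
    simpa [dotProduct, Pi.sub_apply] using h1
  rw [hβ]
  simp only [Pi.add_apply]
  rw [sum_sq_add, hcross]
  ring

def gradD {m n : ℕ} (c C : ℝ) (x : Fin m → Fin n → ℝ) (y : Fin m → ℝ) (α : Fin m → ℝ) :
    Fin m → ℝ :=
  fun i => ((Qmat x y)ᵀ * Qmat x y).mulVec α i + (if 0 ≤ α i then α i / C else α i / c) - 1

lemma phi_sum {m : ℕ} (c C : ℝ) (α : Fin m → ℝ) :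
    (1/2) * ∑ i, ((Emat c C α).mulVec α i) * α i = ∑ i, hLoss c C (α i) := by
  rw [Finset.mul_sum]
  refine Finset.sum_congr rfl fun i _ => ?_
  rw [Emat, Matrix.mulVec_diagonal]
  unfold hLoss
  split_ifs <;> ring

lemma D_expand {m n : ℕ} (c C : ℝ) (x : Fin m → Fin n → ℝ) (y : Fin m → ℝ) (α β : Fin m → ℝ) :
    Dfun c C x y β = Dfun c C x y α + (∑ i, gradD c C x y α i * (β i - α i))
      + ((1/2) * ∑ i, ((Qmat x y).mulVec (β - α) i)^2
        + ∑ i, (hLoss c C (β i) - hLoss c C (α i)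
          - (if 0 ≤ α i then α i / C else α i / c) * (β i - α i))) := by
  unfold Dfun
  rw [phi_sum, phi_sum, quad_expand (Qmat x y) α β]
  unfold gradD
  simp only [mul_sub, sub_mul, add_mul, Finset.sum_add_distrib, Finset.sum_sub_distrib, one_mul]
  ring

lemma D_lower {m n : ℕ} {c C : ℝ} (hc : 0 < c) (hcC : c < C)
    (x : Fin m → Fin n → ℝ) (y : Fin m → ℝ) (α β : Fin m → ℝ) :
    Dfun c C x y α + (∑ i, gradD c C x y α i * (β i - α i)) + ∑ i, (β i - α i)^2/(2*C)
      ≤ Dfun c C x y β := by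
  rw [D_expand c C x y α β]
  have h1 : ∑ i, (β i - α i)^2/(2*C) ≤ ∑ i, (hLoss c C (β i) - hLoss c C (α i)
      - (if 0 ≤ α i then α i / C else α i / c) * (β i - α i)) :=
    Finset.sum_le_sum fun i _ => (phi_breg hc hcC (α i) (β i)).1
  have h2 : (0:ℝ) ≤ (1/2) * ∑ i, ((Qmat x y).mulVec (β - α) i)^2 := by positivity
  linarith

lemma D_upper {m n : ℕ} {c C : ℝ} (hc : 0 < c) (hcC : c < C)
    (x : Fin m → Fin n → ℝ) (y : Fin m → ℝ) (α β : Fin m → ℝ) :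
    Dfun c C x y β ≤ Dfun c C x y α + (∑ i, gradD c C x y α i * (β i - α i))
      + ((1/2) * ∑ i, ((Qmat x y).mulVec (β - α) i)^2 + ∑ i, (β i - α i)^2/(2*c)) := by
  rw [D_expand c C x y α β]
  have h1 : ∑ i, (hLoss c C (β i) - hLoss c C (α i)
      - (if 0 ≤ α i then α i / C else α i / c) * (β i - α i)) ≤ ∑ i, (β i - α i)^2/(2*c) :=
    Finset.sum_le_sum fun i _ => (phi_breg hc hcC (α i) (β i)).2
  linarith

lemma sum_pair {m : ℕ} (g yv : Fin m → ℝ) (i j : Fin m) :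
    ∑ k, g k * ((if k = i then yv j else 0) - (if k = j then yv i else 0))
      = g i * yv j - g j * yv i := by
  simp only [mul_sub, Finset.sum_sub_distrib, mul_ite, mul_zero, Finset.sum_ite_eq',
    Finset.mem_univ, if_true]

set_option maxHeartbeats 1000000 in
lemma stat_dir {m n : ℕ} {c C : ℝ} (hc : 0 < c) (hcC : c < C)
    (x : Fin m → Fin n → ℝ) (y : Fin m → ℝ) (s : ℕ) (αstar : Fin m → ℝ)
    (hloc : ∃ ε > (0 : ℝ), ∀ α : Fin m → ℝ, feasible y s α → euclNorm (α - αstar) < ε →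
      Dfun c C x y αstar ≤ Dfun c C x y α)
    (hay : ∑ i, αstar i * y i = 0)
    (d : Fin m → ℝ) (hdy : ∑ i, d i * y i = 0)
    (hdz : ∀ t : ℝ, zeroNorm (αstar + t • d) ≤ s) :
    ∑ i, gradD c C x y αstar i * d i = 0 := by
  obtain ⟨ε, hε, hmin⟩ := hloc
  set G := ∑ i, gradD c C x y αstar i * d i with hG
  set X := (1/2) * ∑ i, ((Qmat x y).mulVec d i)^2 with hX
  set Y := ∑ i, (d i)^2/(2*c) with hY
  have hX0 : 0 ≤ X := by rw [hX]; positivity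
  have hY0 : 0 ≤ Y := by rw [hY]; positivity
  have hed : 0 ≤ euclNorm d := Real.sqrt_nonneg _
  have key : ∀ t : ℝ, |t| < ε / (euclNorm d + 1) → 0 ≤ t * G + t^2 * (X + Y) := by
    intro t ht
    have hfeast : feasible y s (αstar + t • d) := by
      refine ⟨?_, hdz t⟩
      have h1 : ∑ i, (αstar + t • d) i * y i
          = ∑ i, αstar i * y i + t * ∑ i, d i * y i := by
        rw [Finset.mul_sum, ← Finset.sum_add_distrib]
        exact Finset.sum_congr rfl fun i _ => by
          simp only [Pi.add_apply, Pi.smul_apply, smul_eq_mul]; ring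
      rw [h1, hay, hdy]; ring
    have hclose : euclNorm ((αstar + t • d) - αstar) < ε := by
      have h1 : ((αstar + t • d) - αstar) = t • d := by funext k; simp
      have h2 : euclNorm (t • d) = |t| * euclNorm d := by
        unfold euclNorm
        have h3 : ∑ i, ((t • d) i)^2 = t^2 * ∑ i, (d i)^2 := by
          rw [Finset.mul_sum]
          exact Finset.sum_congr rfl fun i _ => by
            simp only [Pi.smul_apply, smul_eq_mul]; ring
        rw [h3, Real.sqrt_mul (sq_nonneg t), Real.sqrt_sq_eq_abs]
      rw [h1, h2]
      calc |t| * euclNorm d ≤ |t| * (euclNorm d + 1) := by nlinarith [abs_nonneg t]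
        _ < ε := (lt_div_iff₀ (by linarith)).mp ht
    have hDle := hmin _ hfeast hclose
    have hup := D_upper hc hcC x y αstar (αstar + t • d)
    have e1 : ∑ i, gradD c C x y αstar i * ((αstar + t • d) i - αstar i) = t * G := by
      rw [hG, Finset.mul_sum]
      exact Finset.sum_congr rfl fun i _ => by
        simp only [Pi.add_apply, Pi.smul_apply, smul_eq_mul]; ring
    have hsub : (αstar + t • d) - αstar = t • d := by funext k; simp
    have e2 : (1/2) * ∑ i, ((Qmat x y).mulVec ((αstar + t • d) - αstar) i)^2 = t^2 * X := by
      rw [hsub, hX, Finset.mul_sum, Finset.mul_sum, Finset.mul_sum]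
      refine Finset.sum_congr rfl fun i _ => ?_
      rw [Matrix.mulVec_smul]
      simp only [Pi.smul_apply, smul_eq_mul]; ring
    have e3 : ∑ i, ((αstar + t • d) i - αstar i)^2/(2*c) = t^2 * Y := by
      rw [hY, Finset.mul_sum]
      refine Finset.sum_congr rfl fun i _ => ?_
      simp only [Pi.add_apply, Pi.smul_apply, smul_eq_mul]; ring
    rw [e1, e2, e3] at hup
    nlinarith [hDle, hup]
  by_contra hG0
  have hGpos : 0 < |G| := abs_pos.mpr hG0
  set K := X + Y with hKdef
  have hK0 : 0 ≤ K := by linarith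
  set u := min (ε/(euclNorm d + 1)/2) (|G|/(2*(K+1))) with hu
  have hu0 : 0 < u := lt_min (by positivity) (by positivity)
  have hu1 : |u| < ε/(euclNorm d + 1) := by
    rw [abs_of_pos hu0]
    have := min_le_left (ε/(euclNorm d + 1)/2) (|G|/(2*(K+1)))
    have h4 : 0 < ε/(euclNorm d + 1) := by positivity
    linarith
  have hA := key u hu1
  have hB := key (-u) (by rwa [abs_neg])
  have habs : u * |G| ≤ u^2 * K := by
    rcases abs_cases G with ⟨h,_⟩ | ⟨h,_⟩ <;> rw [h] <;> nlinarith
  have hle : |G| ≤ u * K := le_of_mul_le_mul_left (by nlinarith) hu0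
  have hu2 : u * (2*(K+1)) ≤ |G| :=
    (le_div_iff₀ (by positivity)).mp (min_le_right (ε/(euclNorm d + 1)/2) (|G|/(2*(K+1))))
  nlinarith [hle, hu2, hu0, hK0, hGpos]

/-- a local minimizer with ‖α*‖₀ < s is the unique global minimizer. -/
theorem stmt_13 {m n : ℕ} (hm : 1 ≤ m) (hn : 1 ≤ n) (c C : ℝ) (hc : 0 < c) (hcC : c < C)
    (x : Fin m → Fin n → ℝ) (y : Fin m → ℝ) (hy : ∀ i, y i = 1 ∨ y i = -1)
    (s : ℕ) (hs1 : 1 ≤ s) (hs2 : s ≤ m)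
    (αstar : Fin m → ℝ) (hfeas : feasible y s αstar)
    (hloc : ∃ ε > (0 : ℝ), ∀ α : Fin m → ℝ, feasible y s α → euclNorm (α - αstar) < ε →
      Dfun c C x y αstar ≤ Dfun c C x y α)
    (hz : zeroNorm αstar < s) :
    (∀ α : Fin m → ℝ, feasible y s α → Dfun c C x y αstar ≤ Dfun c C x y α) ∧
      (∀ α : Fin m → ℝ, feasible y s α → Dfun c C x y α = Dfun c C x y αstar → α = αstar) := by
  have hC : 0 < C := hc.trans hcC
  have hker : ∀ β : Fin m → ℝ, feasible y s β →
      ∑ k, gradD c C x y αstar k * (β k - αstar k) = 0 := by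
    by_cases hmain : (∃ j, αstar j ≠ 0) ∨ 2 ≤ s
    · -- main case: stationarity gives gradD = b • y
      obtain ⟨j₀, hj₀⟩ : ∃ j₀ : Fin m, αstar j₀ ≠ 0 ∨ ((∀ k, αstar k = 0) ∧ 2 ≤ s) := by
        rcases hmain with ⟨j, hj⟩ | h2s
        · exact ⟨j, Or.inl hj⟩
        · by_cases hex : ∃ j, αstar j ≠ 0
          · exact ⟨hex.choose, Or.inl hex.choose_spec⟩
          · push_neg at hex
            exact ⟨⟨0, hm⟩, Or.inr ⟨hex, h2s⟩⟩
      have hb : ∀ i, gradD c C x y αstar i = (gradD c C x y αstar j₀ * y j₀) * y i := by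
        intro i
        set d : Fin m → ℝ :=
          fun k => (if k = i then y j₀ else 0) - (if k = j₀ then y i else 0) with hd
        have hdy : ∑ k, d k * y k = 0 := by
          have h1 : ∑ k, d k * y k = ∑ k, y k * d k :=
            Finset.sum_congr rfl fun k _ => mul_comm _ _
          rw [h1, hd, sum_pair y y i j₀]; ring
        have hdz : ∀ t : ℝ, zeroNorm (αstar + t • d) ≤ s := by
          intro t
          have hsub : {k | (αstar + t • d) k ≠ 0}
              ⊆ insert i (insert j₀ {k | αstar k ≠ 0}) := by
            intro k hk
            simp only [Set.mem_setOf_eq, Pi.add_apply, Pi.smul_apply, smul_eq_mul] at hk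
            by_contra hkn
            simp only [Set.mem_insert_iff, Set.mem_setOf_eq, not_or, not_not] at hkn
            obtain ⟨hki, hkj, hk0⟩ := hkn
            apply hk
            rw [hd]
            simp only [if_neg hki, if_neg hkj, hk0]
            ring
          have hcard := Set.ncard_le_ncard hsub (Set.toFinite _)
          rcases hj₀ with hj₀ | ⟨hzero, h2s⟩
          · rw [Set.insert_eq_of_mem (Set.mem_setOf_eq ▸ hj₀ : j₀ ∈ {k | αstar k ≠ 0})] at hcard
            have h5 := Set.ncard_insert_le i {k | αstar k ≠ 0}
            have h6 : zeroNorm αstar = {k | αstar k ≠ 0}.ncard := rfl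
            unfold zeroNorm
            omega
          · have hempty : {k | αstar k ≠ 0} = (∅ : Set (Fin m)) := by
              ext k; simp [hzero k]
            rw [hempty] at hcard
            have h5 := Set.ncard_insert_le i (insert j₀ (∅ : Set (Fin m)))
            have h6 := Set.ncard_insert_le j₀ (∅ : Set (Fin m))
            unfold zeroNorm
            simp only [Set.ncard_empty] at h6
            omega
        have hG0 := stat_dir hc hcC x y s αstar hloc hfeas.1 d hdy hdz
        rw [hd, sum_pair (gradD c C x y αstar) y i j₀] at hG0
        have heq : gradD c C x y αstar i * y j₀ = gradD c C x y αstar j₀ * y i := by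
          linarith
        rcases hy i with hi | hi <;> rcases hy j₀ with hj | hj <;>
          rw [hi, hj] at heq ⊢ <;> linarith
      intro β hβ
      calc ∑ k, gradD c C x y αstar k * (β k - αstar k)
          = ∑ k, (gradD c C x y αstar j₀ * y j₀) * (β k * y k - αstar k * y k) := by
            refine Finset.sum_congr rfl fun k _ => ?_
            rw [hb k]
            rcases hy k with hk | hk <;> rw [hk] <;> ring
        _ = (gradD c C x y αstar j₀ * y j₀)
            * ((∑ k, β k * y k) - ∑ k, αstar k * y k) := by
            rw [← Finset.mul_sum, Finset.sum_sub_distrib]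
        _ = 0 := by rw [hβ.1, hfeas.1]; ring
    · -- degenerate case: s = 1 and αstar = 0, feasible set is {0}
      push_neg at hmain
      obtain ⟨hex, hs2'⟩ := hmain
      have hs1' : s = 1 := by omega
      have hzero : ∀ k, αstar k = 0 := hex
      have hfeas0 : ∀ β : Fin m → ℝ, feasible y s β → ∀ k, β k = 0 := by
        intro β hβ
        by_contra hcon
        push_neg at hcon
        obtain ⟨k₀, hk₀⟩ := hcon
        have honly : ∀ j, j ≠ k₀ → β j = 0 := by
          intro j hj
          by_contra hbj
          have hsub2 : ({k₀, j} : Set (Fin m)) ⊆ {k | β k ≠ 0} := by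
            intro z hz
            rcases hz with hz | hz <;> simp only [Set.mem_setOf_eq] <;>
              [(rw [hz]; exact hk₀); (rw [Set.mem_singleton_iff] at hz; rw [hz]; exact hbj)]
          have h2 : 2 ≤ zeroNorm β := by
            have := Set.ncard_le_ncard hsub2 (Set.toFinite _)
            rw [Set.ncard_pair (Ne.symm hj)] at this
            exact this
          have := hβ.2
          omega
        have hsum0 : ∑ k, β k * y k = β k₀ * y k₀ :=
          Finset.sum_eq_single k₀ (fun j _ hj => by rw [honly j hj, zero_mul])
            (fun h => absurd (Finset.mem_univ k₀) h)
        rw [hβ.1] at hsum0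
        rcases hy k₀ with h | h <;> rw [h] at hsum0 <;> apply hk₀ <;> linarith
      intro β hβ
      refine Finset.sum_eq_zero fun k _ => ?_
      rw [hfeas0 β hβ k, hzero k]; ring
  constructor
  · intro α hα
    have hL := D_lower hc hcC x y αstar α
    rw [hker α hα] at hL
    have h0 : (0:ℝ) ≤ ∑ i, (α i - αstar i)^2/(2*C) := by positivity
    linarith
  · intro α hα heq
    have hL := D_lower hc hcC x y αstar α
    rw [hker α hα] at hL
    have hsum : ∑ i, (α i - αstar i)^2/(2*C) ≤ 0 := by linarith
    have hz2 : ∀ i ∈ Finset.univ, (α i - αstar i)^2/(2*C) = 0 := by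
      rw [← Finset.sum_eq_zero_iff_of_nonneg (fun i _ => by positivity)]
      exact le_antisymm hsum (Finset.sum_nonneg fun i _ => by positivity)
    funext k
    have h := hz2 k (Finset.mem_univ k)
    rw [div_eq_zero_iff] at h
    rcases h with h | h
    · have := pow_eq_zero_iff (n := 2) (by norm_num) |>.mp h
      linarith [this]
    · linarith
end
end

section
/- (Lemma 2 a, case ‖α*‖₀ = s.) Let (α*, b*) be an η-stationary point of (SSVM) with ‖α*‖₀ = s and η·max_i |g_i(α*, b*)| < ‖α*‖_[s]. Then T_s(α* − η·g(α*, b*)) = {S*}, where S* = supp(α*), and there exists δ* > 0 such that for every (α, b) ∈ ℝ^m × ℝ with ‖(α,b) − (α*,b*)‖ < δ* and ‖α‖₀ ≤ s, one has T_s(α − η·g(α, b)) = {S*}. -/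
noncomputable section

open Finset Matrix

-- auxiliary lemma
lemma Tsets_eq_of_gap {m s : ℕ} (β : Fin m → ℝ) (S : Finset (Fin m)) (hcard : S.card = s)
    (hgt : ∀ i ∈ S, ∀ j ∉ S, |β j| < |β i|) : Tsets s β = {S} := by
  ext T
  simp only [Set.mem_singleton_iff, Tsets, Set.mem_setOf_eq]
  constructor
  · rintro ⟨hTc, hT⟩
    have hsub : S ⊆ T := by
      intro i hi
      by_contra hiT
      by_cases hTS : T ⊆ S
      · have hTeq : T = S := Finset.eq_of_subset_of_card_le hTS (by omega)
        exact hiT (hTeq ▸ hi)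
      · obtain ⟨j, hjT, hjS⟩ := Finset.not_subset.mp hTS
        exact absurd (hT j hjT i hiT) (not_le.mpr (hgt i hi j hjS))
    exact (Finset.eq_of_subset_of_card_le hsub (by omega)).symm
  · rintro rfl
    exact ⟨hcard, fun i hi j hj => le_of_lt (hgt i hi j hj)⟩

set_option maxHeartbeats 1000000 in
/-- Lemma 2 a, case ‖α*‖₀ = s: T_s is locally constant, equal to {supp(α*)}. -/
theorem stmt_17 {m n : ℕ} (hm : 1 ≤ m) (hn : 1 ≤ n) (c C : ℝ) (hc : 0 < c) (hcC : c < C)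
    (x : Fin m → Fin n → ℝ) (y : Fin m → ℝ) (hy : ∀ i, y i = 1 ∨ y i = -1)
    (s : ℕ) (hs1 : 1 ≤ s) (hs2 : s ≤ m) (η : ℝ) (hη : 0 < η)
    (αstar : Fin m → ℝ) (bstar : ℝ)
    (hst : etaStat c C x y s η αstar bstar) (hz : zeroNorm αstar = s)
    (hgap : η * (⨆ i, |gfun c C x y αstar bstar i|) < sthLargest s αstar) :
    Tsets s (αstar - η • gfun c C x y αstar bstar)
        = {(Set.toFinite {i | αstar i ≠ 0}).toFinset} ∧
      ∃ δ > (0 : ℝ), ∀ (α : Fin m → ℝ) (b : ℝ), pairDist α b αstar bstar < δ →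
        zeroNorm α ≤ s →
        Tsets s (α - η • gfun c C x y α b) = {(Set.toFinite {i | αstar i ≠ 0}).toFinset} := by
  classical
  obtain ⟨⟨hz0, hmin⟩, hby⟩ := hst
  set gst := gfun c C x y αstar bstar with hgst
  set βst := αstar - η • gst with hβst
  set S : Finset (Fin m) := (Set.toFinite {i | αstar i ≠ 0}).toFinset with hS
  have hmemS : ∀ i, i ∈ S ↔ αstar i ≠ 0 := fun i => Set.Finite.mem_toFinset _
  have hz' : {i | αstar i ≠ 0}.ncard = s := hz
  have hScard : S.card = s := by
    rw [hS, ← Set.ncard_eq_toFinset_card]; exact hz'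
  have hC : (0:ℝ) < C := lt_trans hc hcC
  have hne : Nonempty (Fin m) := ⟨⟨0, hm⟩⟩
  set G := ⨆ i, |gst i| with hG
  have hbdd : BddAbove (Set.range fun i => |gst i|) := Finite.bddAbove_range _
  have hGle : ∀ i, |gst i| ≤ G := fun i => le_ciSup hbdd i
  have hG0 : 0 ≤ G := le_trans (abs_nonneg _) (hGle ⟨0, hm⟩)
  set ρ := sthLargest s αstar with hρ
  have hgap' : η * G < ρ := hgap
  -- ρ ≤ |αstar i| on the support
  have hρ_le : ∀ i, αstar i ≠ 0 → ρ ≤ |αstar i| := by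
    intro i hi
    apply Real.sSup_le _ (abs_nonneg _)
    intro t ht
    simp only [Set.mem_setOf_eq] at ht
    by_contra hlt
    push_neg at hlt
    have hsub : {j | t ≤ |αstar j|} ⊆ {j | αstar j ≠ 0} \ {i} := by
      intro j hj
      simp only [Set.mem_setOf_eq] at hj
      refine ⟨?_, ?_⟩
      · simp only [Set.mem_setOf_eq]
        intro h0
        rw [h0] at hj
        simp only [abs_zero] at hj
        have := abs_nonneg (αstar i)
        linarith
      · simp only [Set.mem_singleton_iff]
        intro hji
        rw [hji] at hj
        linarith
    have h1 : {j | t ≤ |αstar j|}.ncard ≤ ({j | αstar j ≠ 0} \ {i}).ncard :=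
      Set.ncard_le_ncard hsub (Set.toFinite _)
    have h2 : ({j | αstar j ≠ 0} \ {i}).ncard = s - 1 := by
      have hi' : i ∈ {j | αstar j ≠ 0} := hi
      rw [Set.ncard_diff_singleton_of_mem hi', hz']
    omega
  -- the fixed-point property on the support
  set v : Fin m → ℝ := fun i => if αstar i ≠ 0 then βst i else 0 with hv
  have hvz : zeroNorm v ≤ s := by
    have hsub : {i | v i ≠ 0} ⊆ {i | αstar i ≠ 0} := by
      intro i hi
      simp only [hv, Set.mem_setOf_eq] at hi ⊢
      by_contra h
      simp [h] at hi
    calc zeroNorm v ≤ {i | αstar i ≠ 0}.ncard := Set.ncard_le_ncard hsub (Set.toFinite _)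
      _ = s := hz'
  have hopt := hmin v hvz
  have hsum : ∑ i, ((αstar - βst) i)^2 ≤ ∑ i, ((v - βst) i)^2 := by
    unfold euclNorm at hopt
    exact (Real.sqrt_le_sqrt_iff (Finset.sum_nonneg fun i _ => sq_nonneg _)).mp hopt
  have hpt : ∀ i, ((v - βst) i)^2 ≤ ((αstar - βst) i)^2 := by
    intro i
    by_cases h : αstar i ≠ 0
    · simp only [hv, Pi.sub_apply, if_pos h, sub_self]
      nlinarith [sq_nonneg (αstar i - βst i)]
    · push_neg at h
      simp [hv, h, Pi.sub_apply]
  have heq : ∀ i ∈ Finset.univ, ((v - βst) i)^2 = ((αstar - βst) i)^2 :=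
    (Finset.sum_eq_sum_iff_of_le (fun i _ => hpt i)).mp
      (le_antisymm (Finset.sum_le_sum fun i _ => hpt i) hsum)
  have hfix : ∀ i, αstar i ≠ 0 → βst i = αstar i := by
    intro i hi
    have h := heq i (Finset.mem_univ i)
    simp only [hv, Pi.sub_apply, if_pos hi, sub_self] at h
    have h2 : (αstar i - βst i)^2 = 0 := by rw [← h]; norm_num
    have := pow_eq_zero_iff (n := 2) (by norm_num) |>.mp h2
    linarith [sub_eq_zero.mp this]
  -- formula for gfun
  have hgf : ∀ (α : Fin m → ℝ) (b : ℝ) (i : Fin m),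
      gfun c C x y α b i = ((Qmat x y)ᵀ * Qmat x y).mulVec α i
        + (if 0 ≤ α i then 1/C else 1/c) * α i - 1 + b * y i := by
    intro α b i
    simp only [gfun, Hmat, Matrix.add_mulVec, Emat, Matrix.mulVec_diagonal,
      Pi.add_apply, Pi.sub_apply, Pi.smul_apply, smul_eq_mul]
  -- Lipschitz bound for the diagonal term
  have he : ∀ t t' : ℝ, |(if 0 ≤ t then 1/C else 1/c) * t - (if 0 ≤ t' then 1/C else 1/c) * t'|
      ≤ (1/c) * |t - t'| := by
    intro t t'
    have h1 : 1/C ≤ 1/c := one_div_le_one_div_of_le hc (le_of_lt hcC)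
    have h2 : (0:ℝ) < 1/C := by positivity
    have h3 : (0:ℝ) < 1/c := by positivity
    rcases le_or_gt 0 t with ht | ht <;> rcases le_or_gt 0 t' with ht' | ht'
    · rw [if_pos ht, if_pos ht', ← mul_sub, abs_mul, abs_of_pos h2]
      exact mul_le_mul_of_nonneg_right h1 (abs_nonneg _)
    · rw [if_pos ht, if_neg (not_le.mpr ht')]
      have hnn : 0 ≤ 1/C * t - 1/c * t' := by nlinarith
      rw [abs_of_nonneg hnn, abs_of_pos (by linarith : (0:ℝ) < t - t')]
      nlinarith [mul_le_mul_of_nonneg_left h1 ht]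
    · rw [if_neg (not_le.mpr ht), if_pos ht']
      have hnp : 1/c * t - 1/C * t' ≤ 0 := by nlinarith
      rw [abs_of_nonpos hnp, abs_of_neg (by linarith : t - t' < 0)]
      nlinarith [mul_le_mul_of_nonneg_left h1 ht']
    · rw [if_neg (not_le.mpr ht), if_neg (not_le.mpr ht'), ← mul_sub, abs_mul, abs_of_pos h3]
  -- coordinate bounds by pairDist
  have hdcoord : ∀ (α : Fin m → ℝ) (b : ℝ) (i : Fin m),
      |α i - αstar i| ≤ pairDist α b αstar bstar := by
    intro α b i
    rw [← Real.sqrt_sq_eq_abs]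
    unfold pairDist
    apply Real.sqrt_le_sqrt
    have h1 : (α i - αstar i)^2 ≤ ∑ j, (α j - αstar j)^2 :=
      Finset.single_le_sum (f := fun j => (α j - αstar j)^2)
        (fun j _ => sq_nonneg _) (Finset.mem_univ i)
    nlinarith [sq_nonneg (b - bstar)]
  have hdb : ∀ (α : Fin m → ℝ) (b : ℝ), |b - bstar| ≤ pairDist α b αstar bstar := by
    intro α b
    rw [← Real.sqrt_sq_eq_abs]
    unfold pairDist
    apply Real.sqrt_le_sqrt
    have : (0:ℝ) ≤ ∑ j, (α j - αstar j)^2 := Finset.sum_nonneg fun j _ => sq_nonneg _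
    linarith
  obtain ⟨M, hM0, hMrow⟩ : ∃ M : ℝ, 0 ≤ M ∧
      ∀ i : Fin m, (∑ j, |((Qmat x y)ᵀ * Qmat x y) i j|) ≤ M :=
    ⟨∑ i, ∑ j, |((Qmat x y)ᵀ * Qmat x y) i j|,
      Finset.sum_nonneg fun i _ => Finset.sum_nonneg fun j _ => abs_nonneg _,
      fun i => Finset.single_le_sum (f := fun k => ∑ j, |((Qmat x y)ᵀ * Qmat x y) k j|)
        (fun k _ => Finset.sum_nonneg fun j _ => abs_nonneg _) (Finset.mem_univ i)⟩
  obtain ⟨L, hL⟩ : ∃ L : ℝ, L = 1 + η * (M + 1/c + 1) := ⟨_, rfl⟩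
  have h3 : (0:ℝ) < 1/c := by positivity
  have hL1 : 1 ≤ L := by
    have hnn : 0 ≤ η * (M + 1/c + 1) :=
      mul_nonneg (le_of_lt hη) (by linarith)
    rw [hL]; linarith
  have hL0 : 0 < L := by linarith
  -- the Lipschitz bound
  have hlip : ∀ (α : Fin m → ℝ) (b : ℝ) (i : Fin m),
      |(α - η • gfun c C x y α b) i - βst i| ≤ L * pairDist α b αstar bstar := by
    intro α b i
    set d := pairDist α b αstar bstar with hd
    have hd0 : 0 ≤ d := Real.sqrt_nonneg _
    have hdc := hdcoord α b i
    have e1 : (α - η • gfun c C x y α b) i - βst i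
        = (α i - αstar i) - η * (gfun c C x y α b i - gst i) := by
      simp only [hβst, Pi.sub_apply, Pi.smul_apply, smul_eq_mul]
      ring
    rw [e1]
    have hgdiff : |gfun c C x y α b i - gst i| ≤ (M + 1/c + 1) * d := by
      rw [hgst, hgf α b i, hgf αstar bstar i]
      have e2 : (((Qmat x y)ᵀ * Qmat x y).mulVec α i
            + (if 0 ≤ α i then 1/C else 1/c) * α i - 1 + b * y i)
          - (((Qmat x y)ᵀ * Qmat x y).mulVec αstar i
            + (if 0 ≤ αstar i then 1/C else 1/c) * αstar i - 1 + bstar * y i)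
          = (((Qmat x y)ᵀ * Qmat x y).mulVec α i - ((Qmat x y)ᵀ * Qmat x y).mulVec αstar i)
            + ((if 0 ≤ α i then 1/C else 1/c) * α i - (if 0 ≤ αstar i then 1/C else 1/c) * αstar i)
            + (b - bstar) * y i := by ring
      rw [e2]
      have hA : |((Qmat x y)ᵀ * Qmat x y).mulVec α i - ((Qmat x y)ᵀ * Qmat x y).mulVec αstar i|
          ≤ M * d := by
        have e3 : ((Qmat x y)ᵀ * Qmat x y).mulVec α i - ((Qmat x y)ᵀ * Qmat x y).mulVec αstar i
            = ∑ j, ((Qmat x y)ᵀ * Qmat x y) i j * (α j - αstar j) := by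
          simp only [Matrix.mulVec, dotProduct, ← Finset.sum_sub_distrib, mul_sub]
        rw [e3]
        calc |∑ j, ((Qmat x y)ᵀ * Qmat x y) i j * (α j - αstar j)|
            ≤ ∑ j, |((Qmat x y)ᵀ * Qmat x y) i j * (α j - αstar j)| :=
              Finset.abs_sum_le_sum_abs _ _
          _ ≤ ∑ j, |((Qmat x y)ᵀ * Qmat x y) i j| * d := by
              apply Finset.sum_le_sum
              intro j _
              rw [abs_mul]
              exact mul_le_mul_of_nonneg_left (hdcoord α b j) (abs_nonneg _)
          _ = (∑ j, |((Qmat x y)ᵀ * Qmat x y) i j|) * d := by rw [Finset.sum_mul]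
          _ ≤ M * d := mul_le_mul_of_nonneg_right (hMrow i) hd0
      have hE : |(if 0 ≤ α i then 1/C else 1/c) * α i
          - (if 0 ≤ αstar i then 1/C else 1/c) * αstar i| ≤ (1/c) * d :=
        le_trans (he (α i) (αstar i)) (mul_le_mul_of_nonneg_left hdc (le_of_lt h3))
      have hY : |(b - bstar) * y i| ≤ d := by
        rw [abs_mul]
        have hy1 : |y i| = 1 := by rcases hy i with h | h <;> simp [h]
        rw [hy1, mul_one]
        exact hdb α b
      set u := ((Qmat x y)ᵀ * Qmat x y).mulVec α i - ((Qmat x y)ᵀ * Qmat x y).mulVec αstar i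
        with hu
      set w := (if 0 ≤ α i then 1/C else 1/c) * α i - (if 0 ≤ αstar i then 1/C else 1/c) * αstar i
        with hw
      set z := (b - bstar) * y i with hzz
      calc |u + w + z| ≤ |u + w| + |z| := abs_add_le _ _
        _ ≤ |u| + |w| + |z| := add_le_add_left (abs_add_le _ _) _
        _ ≤ M * d + (1/c) * d + d := add_le_add (add_le_add hA hE) hY
        _ = (M + 1/c + 1) * d := by ring
    calc |(α i - αstar i) - η * (gfun c C x y α b i - gst i)|
        ≤ |α i - αstar i| + |η * (gfun c C x y α b i - gst i)| := abs_sub _ _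
      _ ≤ d + η * ((M + 1/c + 1) * d) := by
          rw [abs_mul, abs_of_pos hη]
          exact add_le_add hdc (mul_le_mul_of_nonneg_left hgdiff (le_of_lt hη))
      _ = L * d := by rw [hL]; ring
  -- gap at base point
  have hbase : ∀ i ∈ S, ∀ j ∉ S, |βst j| < |βst i| := by
    intro i hi j hj
    rw [hmemS] at hi hj
    push_neg at hj
    have h1 : |βst j| ≤ η * G := by
      have e4 : βst j = -(η * gst j) := by
        simp only [hβst, Pi.sub_apply, Pi.smul_apply, smul_eq_mul, hj]
        ring
      rw [e4, abs_neg, abs_mul, abs_of_pos hη]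
      exact mul_le_mul_of_nonneg_left (hGle j) (le_of_lt hη)
    have h2 : |βst i| = |αstar i| := by rw [hfix i hi]
    have h4 := hρ_le i hi
    linarith
  refine ⟨Tsets_eq_of_gap _ S hScard hbase, (ρ - η * G)/(2*L), div_pos (by linarith) (by linarith), ?_⟩
  intro α b hdlt _
  apply Tsets_eq_of_gap _ S hScard
  intro i hi j hj
  set d := pairDist α b αstar bstar with hd
  have hd0 : 0 ≤ d := Real.sqrt_nonneg _
  have hLd : L * d < (ρ - η * G)/2 := by
    have := mul_lt_mul_of_pos_left hdlt hL0
    have hLne : L ≠ 0 := ne_of_gt hL0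
    have hLδ : L * ((ρ - η * G)/(2*L)) = (ρ - η * G)/2 := by
      field_simp
    linarith [hLδ ▸ this]
  have hli := hlip α b i
  have hlj := hlip α b j
  rw [hmemS] at hi hj
  push_neg at hj
  have hbi : |βst i| = |αstar i| := by rw [hfix i hi]
  have hbj : |βst j| ≤ η * G := by
    have e4 : βst j = -(η * gst j) := by
      simp only [hβst, Pi.sub_apply, Pi.smul_apply, smul_eq_mul, hj]
      ring
    rw [e4, abs_neg, abs_mul, abs_of_pos hη]
    exact mul_le_mul_of_nonneg_left (hGle j) (le_of_lt hη)
  have h4 := hρ_le i hi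
  have t1 : |βst i| - |(α - η • gfun c C x y α b) i| ≤ L * d := by
    calc |βst i| - |(α - η • gfun c C x y α b) i|
        ≤ |βst i - (α - η • gfun c C x y α b) i| := abs_sub_abs_le_abs_sub _ _
      _ = |(α - η • gfun c C x y α b) i - βst i| := abs_sub_comm _ _
      _ ≤ L * d := hli
  have t2 : |(α - η • gfun c C x y α b) j| - |βst j| ≤ L * d := by
    calc |(α - η • gfun c C x y α b) j| - |βst j|
        ≤ |(α - η • gfun c C x y α b) j - βst j| := abs_sub_abs_le_abs_sub _ _
      _ ≤ L * d := hlj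
  linarith
end
end
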